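/- Let G^σ be an oriented graph containing a pendant vertex y with unique neighbor x, and let H^σ = G^σ − x − y. Then sr(G^σ) = sr(H^σ) + 2. -/

import Mathlib

open scoped Classical

def IsSkewAdjMatrix {V : Type*} (G : SimpleGraph V) (S : Matrix V V ℝ) : Prop :=
  (∀ i j, G.Adj i j → S i j = 1 ∨ S i j = -1) ∧
  (∀ i j, ¬ G.Adj i j → S i j = 0) ∧
  (∀ i j, S j i = - S i j)

noncomputable def adjMat {V : Type*} (G : SimpleGraph V) : Matrix V V ℝ :=
  Matrix.of fun i j => if G.Adj i j then 1 else 0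

noncomputable def cycDim {V : Type*} (G : SimpleGraph V) : ℤ :=
  (G.edgeSet.ncard : ℤ) - Nat.card V + Nat.card G.ConnectedComponent


open Matrix

private lemma range_prodMap' {R M₁ M₂ N₁ N₂ : Type*} [CommRing R]
    [AddCommGroup M₁] [AddCommGroup M₂] [AddCommGroup N₁] [AddCommGroup N₂]
    [Module R M₁] [Module R M₂] [Module R N₁] [Module R N₂]
    (f : M₁ →ₗ[R] N₁) (g : M₂ →ₗ[R] N₂) :
    LinearMap.range (f.prodMap g) = (LinearMap.range f).prod (LinearMap.range g) := by
  ext ⟨y₁, y₂⟩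
  simp only [LinearMap.mem_range, Submodule.mem_prod]
  constructor
  · rintro ⟨⟨x₁, x₂⟩, h⟩
    have h1 : f x₁ = y₁ := congrArg Prod.fst h
    have h2 : g x₂ = y₂ := congrArg Prod.snd h
    exact ⟨⟨x₁, h1⟩, ⟨x₂, h2⟩⟩
  · rintro ⟨⟨x₁, h₁⟩, ⟨x₂, h₂⟩⟩
    exact ⟨(x₁, x₂), by simp [LinearMap.prodMap_apply, h₁, h₂]⟩

private def prodSubEquiv {R M N : Type*} [CommRing R] [AddCommGroup M] [AddCommGroup N]
    [Module R M] [Module R N] (p : Submodule R M) (q : Submodule R N) :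
    (p.prod q) ≃ₗ[R] p × q where
  toFun x := (⟨x.1.1, x.2.1⟩, ⟨x.1.2, x.2.2⟩)
  invFun a := ⟨(a.1.1, a.2.1), ⟨a.1.2, a.2.2⟩⟩
  left_inv _ := rfl
  right_inv _ := rfl
  map_add' _ _ := rfl
  map_smul' _ _ := rfl

private lemma rank_fromBlocks_diag {m n : Type*} [Fintype m] [Fintype n]
    [DecidableEq m] [DecidableEq n] (A : Matrix m m ℝ) (D : Matrix n n ℝ) :
    (Matrix.fromBlocks A 0 0 D).rank = A.rank + D.rank := by
  classical
  set E := LinearEquiv.sumArrowLequivProdArrow m n ℝ ℝ with hE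
  have key : (Matrix.fromBlocks A 0 0 D).mulVecLin
      = E.symm.toLinearMap ∘ₗ ((A.mulVecLin.prodMap D.mulVecLin) ∘ₗ E.toLinearMap) := by
    apply LinearMap.ext; intro v
    funext w
    cases w with
    | inl i =>
      simp [E, Matrix.fromBlocks_mulVec, LinearEquiv.sumArrowLequivProdArrow, Equiv.sumArrowEquivProdArrow, Function.comp]
    | inr i =>
      simp [E, Matrix.fromBlocks_mulVec, LinearEquiv.sumArrowLequivProdArrow, Equiv.sumArrowEquivProdArrow, Function.comp]
  rw [Matrix.rank, key, LinearMap.range_comp, LinearMap.range_comp,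
    LinearEquiv.range, Submodule.map_top, LinearEquiv.finrank_map_eq, range_prodMap']
  rw [(prodSubEquiv _ _).finrank_eq, Module.finrank_prod]
  rfl

/-- pendant -/
theorem skewRank_pendant_delete {V : Type*} [Fintype V] [DecidableEq V]
    (G : SimpleGraph V) (S : Matrix V V ℝ) (hS : IsSkewAdjMatrix G S)
    (x y : V) (hy : G.neighborSet y = {x}) :
    S.rank =
      (S.submatrix
        (fun w : ({x, y}ᶜ : Finset V) => (w : V))
        (fun w : ({x, y}ᶜ : Finset V) => (w : V))).rank + 2 := by
  classical
  obtain ⟨h1, h0, hskew⟩ := hS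
  have hadj : G.Adj y x := by
    have : x ∈ G.neighborSet y := by rw [hy]; exact Set.mem_singleton x
    exact this
  have hxy : x ≠ y := hadj.ne'
  set s := S x y with hs
  have hs1 : s = 1 ∨ s = -1 := h1 x y hadj.symm
  have hs0 : s ≠ 0 := by rcases hs1 with h | h <;> rw [h] <;> norm_num
  have hdiag : ∀ v, S v v = 0 := fun v => by have := hskew v v; linarith
  have hyrow : ∀ v, v ≠ x → S y v = 0 := by
    intro v hv
    refine h0 y v ?_
    intro h
    have : v ∈ G.neighborSet y := h
    rw [hy] at this
    exact hv this
  -- the complementary index type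
  set K := ({x, y}ᶜ : Finset V)
  have hK : ∀ k : K, (k : V) ≠ x ∧ (k : V) ≠ y := by
    intro k
    have := k.2
    simp only [K, Finset.mem_compl, Finset.mem_insert, Finset.mem_singleton, not_or] at this
    exact this
  -- the reindexing equivalence
  let f : Fin 2 ⊕ K → V := Sum.elim ![x, y] Subtype.val
  have hf : Function.Bijective f := by
    constructor
    · rintro (i | k) (j | l) h
      · simp only [f, Sum.elim_inl] at h
        fin_cases i <;> fin_cases j <;>
          simp only [Matrix.cons_val_zero, Matrix.cons_val_one, Matrix.head_cons] at h
        · rfl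
        · exact absurd h hxy
        · exact absurd h.symm hxy
        · rfl
      · exfalso; fin_cases i <;> simp [f] at h
        · exact (hK l).1 h.symm
        · exact (hK l).2 h.symm
      · exfalso; fin_cases j <;> simp [f] at h
        · exact (hK k).1 h
        · exact (hK k).2 h
      · simp only [f, Sum.elim_inr] at h
        exact congrArg Sum.inr (Subtype.ext h)
    · intro v
      by_cases hvx : v = x
      · exact ⟨Sum.inl 0, by simp [f, hvx]⟩
      by_cases hvy : v = y
      · exact ⟨Sum.inl 1, by simp [f, hvy]⟩
      · refine ⟨Sum.inr ⟨v, ?_⟩, rfl⟩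
        simp [K, Finset.mem_compl, hvx, hvy]
  let e : Fin 2 ⊕ K ≃ V := Equiv.ofBijective f hf
  have he : ∀ z, e z = f z := fun z => rfl
  set M := S.submatrix e e with hM
  have hrank : S.rank = M.rank := (Matrix.rank_submatrix S e e).symm
  -- blocks
  set A : Matrix (Fin 2) (Fin 2) ℝ := !![0, s; -s, 0] with hA
  set A' : Matrix (Fin 2) (Fin 2) ℝ := !![0, -s⁻¹; s⁻¹, 0] with hA'
  have hAA' : A * A' = 1 := by
    ext i j
    fin_cases i <;> fin_cases j <;>
      simp [hA, hA', Matrix.mul_apply, Fin.sum_univ_two] <;> field_simp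
  have hA'A : A' * A = 1 := by
    ext i j
    fin_cases i <;> fin_cases j <;>
      simp [hA, hA', Matrix.mul_apply, Fin.sum_univ_two] <;> field_simp
  letI : Invertible A := ⟨A', hA'A, hAA'⟩
  have hinvA : ⅟A = A' := rfl
  set B := M.toBlocks₁₂ with hB
  set C := M.toBlocks₂₁ with hC
  set D := M.toBlocks₂₂ with hD
  have hA11 : M.toBlocks₁₁ = A := by
    ext i j
    fin_cases i <;> fin_cases j <;>
      simp [Matrix.toBlocks₁₁, hM, hA, he, f, hdiag, hskew x y, hs]
  have hBrow : ∀ k : K, B 1 k = 0 := by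
    intro k
    have : B 1 k = S y (k : V) := rfl
    rw [this, hyrow _ (hK k).1]
  have hCcol : ∀ k : K, C k 1 = 0 := by
    intro k
    have : C k 1 = S (k : V) y := rfl
    rw [this, hskew y (k : V), hyrow _ (hK k).1, neg_zero]
  have hCB : C * ⅟A * B = 0 := by
    rw [hinvA]
    ext k k'
    simp [Matrix.mul_apply, Fin.sum_univ_two, hA', hBrow, hCcol]
  have hMblocks : M = Matrix.fromBlocks A B C D := by
    rw [← hA11, hB, hC, hD, Matrix.fromBlocks_toBlocks]
  have hdecomp : M = Matrix.fromBlocks 1 0 (C * ⅟A) 1 *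
      Matrix.fromBlocks A 0 0 (D - C * ⅟A * B) * Matrix.fromBlocks 1 (⅟A * B) 0 1 := by
    rw [hMblocks]; exact Matrix.fromBlocks_eq_of_invertible₁₁ A B C D
  have hdetL : IsUnit (Matrix.fromBlocks (1 : Matrix (Fin 2) (Fin 2) ℝ) 0 (C * ⅟A) 1).det := by
    rw [Matrix.det_fromBlocks_zero₁₂]; simp
  have hdetR : IsUnit (Matrix.fromBlocks (1 : Matrix (Fin 2) (Fin 2) ℝ) (⅟A * B) 0 1).det := by
    rw [Matrix.det_fromBlocks_zero₂₁]; simp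
  have hrank2 : M.rank = (Matrix.fromBlocks A 0 0 (D - C * ⅟A * B)).rank := by
    rw [hdecomp, Matrix.rank_mul_eq_left_of_isUnit_det _ _ hdetR,
      Matrix.rank_mul_eq_right_of_isUnit_det _ _ hdetL]
  have hArank : A.rank = 2 := by
    rw [Matrix.rank_of_isUnit A (isUnit_of_invertible A)]
    simp
  have hDeq : D = S.submatrix
      (fun w : ({x, y}ᶜ : Finset V) => (w : V))
      (fun w : ({x, y}ᶜ : Finset V) => (w : V)) := rfl
  rw [hrank, hrank2, hCB, sub_zero, rank_fromBlocks_diag, hArank, ← hDeq, add_comm]
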